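/- Let Y be a profinite set and L ⊆ Y*. Suppose there exist clopen subsets V₁, …, Vₙ of Y such that for every w ∈ L there exists f : {1,…,|w|} → {1,…,n} with w ∈ V_{f(1)} ⋯ V_{f(|w|)} ⊆ L. Then there exists a continuous surjection q : Y → A onto a finite discrete set such that L = (q*)⁻¹(q*[L]). -/

import Mathlib

/-- If `L ⊆ Y*` admits clopen sets `V₁, …, Vₙ` such that every `w ∈ L` lies in
some product `V_{f(1)} ⋯ V_{f(|w|)} ⊆ L`, then `L = (q*)⁻¹(q*[L])` for some
continuous surjection `q` from `Y` onto a finite discrete set. -/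
theorem clopen_sets_implies_saturated {Y : Type*} [TopologicalSpace Y]
    [CompactSpace Y] [T2Space Y] [TotallyDisconnectedSpace Y]
    (L : Set (List Y)) (n : ℕ) (V : Fin n → Set Y)
    (hV : ∀ i, IsClopen (V i))
    (hL : ∀ w ∈ L, ∃ f : Fin w.length → Fin n,
      (∀ j : Fin w.length, w.get j ∈ V (f j)) ∧
      ∀ (u : List Y) (hu : u.length = w.length),
        (∀ j : Fin w.length, u.get (Fin.cast hu.symm j) ∈ V (f j)) → u ∈ L) :
    ∃ (n' : ℕ) (q : Y → Fin n'), Continuous q ∧ Function.Surjective q ∧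
      L = (List.map q) ⁻¹' (List.map q '' L) := by
  classical
  set g : Y → (Fin n → Bool) := fun y i => (V i).boolIndicator y with hg
  have hgc : Continuous g :=
    continuous_pi fun i => (continuous_boolIndicator_iff_isClopen (V i)).mpr (hV i)
  have : Fintype (Set.range g) := Fintype.ofFinite _
  set e : Set.range g ≃ Fin (Fintype.card (Set.range g)) := Fintype.equivFin _ with he
  set q : Y → Fin (Fintype.card (Set.range g)) :=
    fun y => e (Set.rangeFactorization g y) with hq
  have hqg : ∀ x y : Y, q x = q y → g x = g y := by
    intro x y h
    have := e.injective h
    exact congrArg Subtype.val this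
  refine ⟨_, q, ?_, ?_, ?_⟩
  · exact Continuous.comp continuous_of_discreteTopology (hgc.subtype_mk _)
  · exact e.surjective.comp Set.rangeFactorization_surjective
  · apply Set.Subset.antisymm
    · intro w hw; exact ⟨w, hw, rfl⟩
    · rintro w ⟨v, hv, hmap⟩
      have hlen : v.length = w.length := by
        simpa using congrArg List.length hmap
      obtain ⟨f, h1, h2⟩ := hL v hv
      refine h2 w hlen.symm ?_
      intro j
      have hqj : q (v.get j) = q (w.get (Fin.cast hlen j)) := by
        have h3 := List.get_of_eq hmap (Fin.cast (by simp) j)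
        simpa using h3
      have hgj : g (v.get j) = g (w.get (Fin.cast hlen j)) := hqg _ _ hqj
      have hmem := h1 j
      rw [Set.mem_iff_boolIndicator] at hmem ⊢
      have : (V (f j)).boolIndicator (w.get (Fin.cast hlen j))
          = (V (f j)).boolIndicator (v.get j) := (congrFun hgj (f j)).symm
      rw [this]; exact hmem
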